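/- Let G be the 3-graph obtained from the complete 3-graph K_5^3 on 5 vertices by removing two edges that intersect in exactly two vertices (e.g., G = K_5^3 ∖ {{2,4,5},{3,4,5}} on vertex set [5]). Then λ(G) ≤ 0.0673 < 9/128. -/
import Mathlib


open Finset

/-- The Lagrangian of a hypergraph `G` on vertex set `Fin n`. -/
noncomputable def lag {n : ℕ} (G : Finset (Finset (Fin n))) : ℝ :=
  sSup {v : ℝ | ∃ x : Fin n → ℝ, (∀ i, 0 ≤ x i) ∧ (∑ i, x i) = 1 ∧
    v = ∑ e ∈ G, ∏ i ∈ e, x i}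

lemma three_var_aux (a u v : ℝ) (ha : 0 ≤ a) (hu : 0 ≤ u) (hv : 0 ≤ v)
    (hs : a + u + v = 1) : a*(u^2+v^2+4*u*v)+u^2*v ≤ 0.2692 := by
  nlinarith [sq_nonneg (u - 0.4373), sq_nonneg (v - 0.3006), sq_nonneg (a - 0.2621),
    mul_nonneg ha hu, mul_nonneg ha hv, mul_nonneg hu hv,
    mul_nonneg (mul_nonneg ha hu) hv, sq_nonneg (u - v), sq_nonneg (u + v - 0.7379),
    mul_nonneg ha (sq_nonneg (u - 0.4373)), mul_nonneg hu (sq_nonneg (v - 0.3006)),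
    mul_nonneg hv (sq_nonneg (u - 0.4373)), mul_nonneg ha (sq_nonneg (v - 0.3006)),
    mul_nonneg hu (sq_nonneg (u - 0.4373)), mul_nonneg hv (sq_nonneg (v - 0.3006))]

lemma five_var_aux (a b c d e : ℝ) (ha : 0 ≤ a) (hb : 0 ≤ b) (hc : 0 ≤ c)
    (hd : 0 ≤ d) (he : 0 ≤ e) (hs : a + b + c + d + e = 1) :
    a*b*c + a*b*d + a*b*e + a*c*d + a*c*e + a*d*e + b*c*d + b*c*e ≤ 0.0673 := by
  have h3 := three_var_aux a (b+c) (d+e) ha (by linarith) (by linarith) (by linarith)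
  nlinarith [h3, mul_nonneg (by linarith : (0:ℝ) ≤ a + d + e) (sq_nonneg (b-c)),
    mul_nonneg ha (sq_nonneg (d-e))]

/-- `K_5^3` minus two edges meeting in two vertices (vertices `0,…,4` standing for
`1,…,5`; the removed edges `{2,4,5}` and `{3,4,5}` become `{1,3,4}` and `{2,3,4}`).
Its Lagrangian is at most `0.0673 < 9/128`. -/
theorem lagrangian_K53_minus_two_edges :
    lag (((Finset.univ : Finset (Fin 5)).powersetCard 3) \
        {({1, 3, 4} : Finset (Fin 5)), ({2, 3, 4} : Finset (Fin 5))}) ≤ 0.0673 ∧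
    (0.0673 : ℝ) < 9 / 128 := by
  constructor
  · apply Real.sSup_le _ (by norm_num)
    rintro v ⟨x, hx, hsum, rfl⟩
    have h : (((Finset.univ : Finset (Fin 5)).powersetCard 3) \
        {({1, 3, 4} : Finset (Fin 5)), ({2, 3, 4} : Finset (Fin 5))}) =
        {({0,1,2} : Finset (Fin 5)), {0,1,3}, {0,1,4}, {0,2,3}, {0,2,4}, {0,3,4},
          {1,2,3}, {1,2,4}} := by decide
    rw [h]
    rw [Finset.sum_insert (by decide), Finset.sum_insert (by decide),
      Finset.sum_insert (by decide), Finset.sum_insert (by decide),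
      Finset.sum_insert (by decide), Finset.sum_insert (by decide),
      Finset.sum_insert (by decide), Finset.sum_singleton]
    repeat rw [Finset.prod_insert (by decide)]
    repeat rw [Finset.prod_singleton]
    have hsum' : x 0 + x 1 + x 2 + x 3 + x 4 = 1 := by
      rw [Fin.sum_univ_five] at hsum; exact hsum
    have key := five_var_aux (x 0) (x 1) (x 2) (x 3) (x 4)
      (hx 0) (hx 1) (hx 2) (hx 3) (hx 4) hsum'
    linarith
  · norm_num
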